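/- Let m ≥ 1 and let d_1, …, d_m be integers with d_i ≥ 2 for all i. Set r = tridet(d_1, …, d_m), a = tridet(d_2, …, d_m) and a' = tridet(d_1, …, d_{m−1}). Then tridet(d_1, …, d_m) = tridet(d_m, …, d_1) (the signed tridiagonal determinant is invariant under reversing the sequence), and a · a' ≡ 1 (mod r). -/

import Mathlib

/-- The tridiagonal matrix `tridiag(d_1, …, d_m)` with diagonal entries `−d_1, …, −d_m`,
entries `1` immediately above and below the diagonal, and `0` elsewhere. -/
def tridiag (L : List ℤ) : Matrix (Fin L.length) (Fin L.length) ℤ :=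
  Matrix.of fun i j =>
    if (i : ℕ) = (j : ℕ) then -(L.get i)
    else if (i : ℕ) + 1 = (j : ℕ) ∨ (j : ℕ) + 1 = (i : ℕ) then 1 else 0

/-- The signed tridiagonal determinant
`tridet(d_1, …, d_m) = (−1)^m det(tridiag(d_1, …, d_m))`;
for the empty sequence the value is `1`. -/
def tridet (L : List ℤ) : ℤ := (-1) ^ L.length * (tridiag L).det

/-! ### Auxiliary: entries of products of 2×2 matrices `[[d, -1], [1, 0]]` -/

def contAux : List ℤ → ℤ × ℤ × ℤ × ℤ
  | [] => (1, 0, 0, 1)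
  | a :: t =>
    let x := contAux t
    (a * x.1 - x.2.2.1, a * x.2.1 - x.2.2.2, x.1, x.2.1)

def cont (L : List ℤ) : ℤ := (contAux L).1

lemma contAux_det (L : List ℤ) :
    (contAux L).1 * (contAux L).2.2.2 - (contAux L).2.1 * (contAux L).2.2.1 = 1 := by
  induction L with
  | nil => simp [contAux]
  | cons a t ih => simp only [contAux]; ring_nf; ring_nf at ih; linarith

lemma contAux_r (a : ℤ) (t : List ℤ) : (contAux (a :: t)).2.2.1 = cont t := rfl

lemma cont_cons (a : ℤ) (t : List ℤ) :
    cont (a :: t) = a * cont t - (contAux t).2.2.1 := rfl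

lemma contAux_q_s (L : List ℤ) (hL : L ≠ []) :
    (contAux L).2.1 = -cont L.dropLast ∧
      (contAux L).2.2.2 = -(contAux L.dropLast).2.2.1 := by
  induction L with
  | nil => simp at hL
  | cons a t ih =>
    rcases eq_or_ne t [] with rfl | ht
    · constructor <;> simp [contAux, cont]
    · obtain ⟨hq, hs⟩ := ih ht
      have hdl : (a :: t).dropLast = a :: t.dropLast := List.dropLast_cons_of_ne_nil ht
      constructor
      · show a * (contAux t).2.1 - (contAux t).2.2.2 = _
        rw [hq, hs, hdl, cont_cons]; ring
      · show (contAux t).2.1 = _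
        rw [hq, hdl, contAux_r]

lemma cont_identity (a : ℤ) (t : List ℤ) (ht : t ≠ []) :
    cont t * cont (a :: t).dropLast = 1 + cont (a :: t) * cont t.dropLast := by
  have h := contAux_det (a :: t)
  obtain ⟨hq, hs⟩ := contAux_q_s (a :: t) (by simp)
  rw [hq, hs] at h
  have hdl : (a :: t).dropLast = a :: t.dropLast := List.dropLast_cons_of_ne_nil ht
  rw [hdl, contAux_r] at h
  have hr : (contAux (a :: t)).2.2.1 = cont t := rfl
  have hp : (contAux (a :: t)).1 = cont (a :: t) := rfl
  rw [hr, hp] at h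
  rw [hdl]
  linarith [h]

/-! ### Auxiliary: size-indexed tridiagonal matrices and the determinant recurrence -/

def triM (v : ℕ → ℤ) (n : ℕ) : Matrix (Fin n) (Fin n) ℤ :=
  Matrix.of fun i j =>
    if (i : ℕ) = (j : ℕ) then v i
    else if (i : ℕ) + 1 = (j : ℕ) ∨ (j : ℕ) + 1 = (i : ℕ) then 1 else 0

lemma sA1 (n : ℕ) (j : Fin n) :
    ((Fin.succ 0 : Fin (n + 2)).succAbove j.succ) = j.succ.succ :=
  Fin.succAbove_of_le_castSucc _ _ (by simp [Fin.le_def])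

lemma sA0 (n : ℕ) : ((Fin.succ 0 : Fin (n + 2)).succAbove 0) = 0 :=
  Fin.succAbove_of_castSucc_lt _ _ (by simp [Fin.lt_def])

lemma triM_det_rec (v : ℕ → ℤ) (n : ℕ) :
    (triM v (n + 1 + 1)).det =
      v 0 * (triM (fun k => v (k + 1)) (n + 1)).det - (triM (fun k => v (k + 2)) n).det := by
  rw [Matrix.det_succ_row_zero]
  rw [Fin.sum_univ_succ, Fin.sum_univ_succ]
  have hz : ∀ j : Fin n, triM v (n + 2) 0 j.succ.succ = 0 := by
    intro j
    simp only [triM, Matrix.of_apply]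
    rw [if_neg, if_neg]
    · simp only [Fin.val_succ, Fin.val_zero]; omega
    · simp only [Fin.val_succ, Fin.val_zero]; omega
  simp only [hz, mul_zero, zero_mul, Finset.sum_const_zero, add_zero]
  have h00 : triM v (n + 2) 0 0 = v 0 := by simp [triM]
  have h01 : triM v (n + 2) 0 (Fin.succ 0) = 1 := by
    simp only [triM, Matrix.of_apply]
    rw [if_neg, if_pos] <;> simp
  rw [h00, h01]
  have hm0 : (triM v (n + 2)).submatrix Fin.succ ((0 : Fin (n + 2)).succAbove)
      = triM (fun k => v (k + 1)) (n + 1) := by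
    ext i j
    simp only [Matrix.submatrix_apply, Fin.succAbove_zero, triM, Matrix.of_apply, Fin.val_succ]
    split_ifs <;> first | rfl | omega
  rw [hm0]
  have hm1 : ((triM v (n + 2)).submatrix Fin.succ ((Fin.succ 0 : Fin (n + 2)).succAbove)).det
      = (triM (fun k => v (k + 2)) n).det := by
    rw [Matrix.det_succ_column_zero, Fin.sum_univ_succ]
    have hz2 : ∀ i : Fin n,
        (triM v (n + 2)).submatrix Fin.succ ((Fin.succ 0 : Fin (n + 2)).succAbove) i.succ 0
          = 0 := by
      intro i
      simp only [Matrix.submatrix_apply, sA0, triM, Matrix.of_apply, Fin.val_succ, Fin.val_zero]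
      split_ifs <;> simp_all [Fin.val_succ] <;> omega
    simp only [hz2, mul_zero, zero_mul, Finset.sum_const_zero, add_zero]
    have hN0 : (triM v (n + 2)).submatrix Fin.succ ((Fin.succ 0 : Fin (n + 2)).succAbove) 0 0
        = 1 := by
      simp only [Matrix.submatrix_apply, sA0, triM, Matrix.of_apply, Fin.val_succ, Fin.val_zero]
      norm_num
    rw [hN0]
    have hsub : ((triM v (n + 2)).submatrix Fin.succ
          ((Fin.succ 0 : Fin (n + 2)).succAbove)).submatrix
        ((0 : Fin (n + 1)).succAbove) Fin.succ = triM (fun k => v (k + 2)) n := by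
      ext i j
      simp only [Matrix.submatrix_apply, Fin.succAbove_zero, sA1, triM, Matrix.of_apply,
        Fin.val_succ]
      split_ifs <;> first | rfl | omega
    rw [hsub]
    simp
  rw [hm1]
  simp [Fin.val_zero, Fin.val_succ]
  ring

lemma tridiag_eq (L : List ℤ) :
    tridiag L = triM (fun k => -(L.getD k 0)) L.length := by
  ext i j
  simp only [tridiag, triM, Matrix.of_apply]
  have : L.get i = L.getD (i : ℕ) 0 := by
    rw [List.getD_eq_getElem L 0 i.isLt, List.get_eq_getElem]
  rw [this]

lemma tridet_nil : tridet [] = 1 := by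
  simp [tridet]

lemma tridet_single (a : ℤ) : tridet [a] = a := by
  have : (tridiag [a]).det = tridiag [a] ⟨0, by simp⟩ ⟨0, by simp⟩ :=
    Matrix.det_fin_one (tridiag [a])
  simp [tridet, this, tridiag]

lemma tridet_rec (a b : ℤ) (t : List ℤ) :
    tridet (a :: b :: t) = a * tridet (b :: t) - tridet t := by
  have e1 : (fun k => -((a :: b :: t).getD (k + 1) 0)) = fun k => -((b :: t).getD k 0) := by
    funext k; simp
  have e2 : (fun k => -((a :: b :: t).getD (k + 2) 0)) = fun k => -(t.getD k 0) := by
    funext k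
    show -((a :: b :: t).getD (k + 1 + 1) 0) = _
    simp
  simp only [tridet, tridiag_eq, List.length_cons, triM_det_rec, e1, e2]
  simp only [List.getD_cons_zero]
  ring

lemma tridet_eq_cont (L : List ℤ) : tridet L = cont L := by
  suffices h : ∀ n (L : List ℤ), L.length ≤ n → tridet L = cont L from h L.length L le_rfl
  intro n
  induction n with
  | zero =>
    intro L h
    have : L = [] := List.eq_nil_of_length_eq_zero (by omega)
    subst this
    rw [tridet_nil]; rfl
  | succ n ih =>
    intro L h
    match L with
    | [] => rw [tridet_nil]; rfl
    | [a] => rw [tridet_single]; show a = a * 1 - 0; ring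
    | a :: b :: t =>
      have h1 : (b :: t).length ≤ n := by simp at h ⊢; omega
      have h2 : t.length ≤ n := by simp at h; omega
      rw [tridet_rec, ih (b :: t) h1, ih t h2, cont_cons a (b :: t), contAux_r b t]

lemma tridet_reverse (L : List ℤ) : tridet L = tridet L.reverse := by
  rcases eq_or_ne L [] with rfl | h0
  · simp
  · have hn : 0 < L.length := List.length_pos_iff.mpr h0
    have hlen : L.reverse.length = L.length := List.length_reverse
    let e : Fin L.reverse.length ≃ Fin L.length := (finCongr hlen).trans Fin.revPerm
    have hsub : tridiag L.reverse = (tridiag L).submatrix e e := by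
      ext i j
      have hi : (i : ℕ) < L.length := lt_of_lt_of_eq i.isLt hlen
      have hj : (j : ℕ) < L.length := lt_of_lt_of_eq j.isLt hlen
      have hei : ((e i : Fin L.length) : ℕ) = L.length - 1 - (i : ℕ) := by
        show ((Fin.rev (Fin.cast hlen i)) : ℕ) = _
        simp [Fin.rev]
        omega
      have hej : ((e j : Fin L.length) : ℕ) = L.length - 1 - (j : ℕ) := by
        show ((Fin.rev (Fin.cast hlen j)) : ℕ) = _
        simp [Fin.rev]
        omega
      have hget : L.reverse.get i = L.get (e i) := by
        rw [List.get_eq_getElem, List.get_eq_getElem, List.getElem_reverse]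
        congr 1
        rw [hei]
      simp only [tridiag, Matrix.of_apply, Matrix.submatrix_apply, hei, hej]
      split_ifs <;> first | (exfalso; omega) | rw [hget] | rfl
    rw [tridet, tridet, hsub, Matrix.det_submatrix_equiv_self, hlen]

/-- For `m ≥ 1` and integers `d_1, …, d_m` all `≥ 2`, set
`r = tridet(d_1, …, d_m)`, `a = tridet(d_2, …, d_m)` and `a′ = tridet(d_1, …, d_{m−1})`.
Then `tridet(d_1, …, d_m) = tridet(d_m, …, d_1)` (the signed tridiagonal determinant is
invariant under reversing the sequence), and `a · a′ ≡ 1 (mod r)`. -/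
theorem tridet_reverse_and_tail_mul_dropLast (L : List ℤ) (hL : L ≠ [])
    (hd : ∀ d ∈ L, 2 ≤ d) :
    tridet L = tridet L.reverse ∧
    tridet L.tail * tridet L.dropLast ≡ 1 [ZMOD tridet L] := by
  refine ⟨tridet_reverse L, ?_⟩
  match L with
  | a :: t =>
    rcases eq_or_ne t [] with rfl | ht
    · show tridet [] * tridet [] ≡ 1 [ZMOD tridet [a]]
      rw [tridet_nil]
      norm_num
    · have key := cont_identity a t ht
      rw [← tridet_eq_cont, ← tridet_eq_cont, ← tridet_eq_cont, ← tridet_eq_cont] at key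
      show tridet t * tridet (a :: t).dropLast ≡ 1 [ZMOD tridet (a :: t)]
      have : (1 : ℤ) - tridet t * tridet (a :: t).dropLast
          = tridet (a :: t) * (-(tridet t.dropLast)) := by linarith [key]
      exact Int.modEq_iff_dvd.mpr ⟨-(tridet t.dropLast), this⟩
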